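/- Let Q be an odd prime, a an integer with Q not dividing a² − 1, ε = ((a²−1)/Q), δ = (2(a+1)/Q). Then T_{(Q−ε)/2}(a) ≡ δ (mod Q²). -/

import Mathlib

open Polynomial Polynomial.Chebyshev

private lemma dvd_sub_trans' {A : Type*} [CommRing A] {q a b c : A}
    (h1 : q ∣ a - b) (h2 : q ∣ b - c) : q ∣ a - c := by
  have h : a - c = (a - b) + (b - c) := by ring
  rw [h]; exact dvd_add h1 h2

theorem chebyshev_T_congr_sq (Q : ℕ) [Fact Q.Prime] (hQ : Odd Q) (a : ℤ)
    (ha : ¬ (Q : ℤ) ∣ a ^ 2 - 1) :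
    let ε : ℤ := legendreSym Q (a ^ 2 - 1)
    let δ : ℤ := legendreSym Q (2 * (a + 1))
    ((Q : ℤ) ^ 2) ∣ (T ℤ (((Q : ℤ) - ε) / 2)).eval a - δ := by
  intro ε δ
  have hp : Q.Prime := Fact.out
  obtain ⟨m, hm⟩ := hQ
  set D : ℤ := a ^ 2 - 1 with hDdef
  have hD0 : ((D : ZMod Q)) ≠ 0 := by
    rw [Ne, ZMod.intCast_zmod_eq_zero_iff_dvd]; exact ha
  have hε : ε = 1 ∨ ε = -1 := legendreSym.eq_one_or_neg_one Q hD0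
  set c : ℤ := 2 * (a + 1) with hcdef
  have hcQ : ¬ (Q : ℤ) ∣ c := by
    intro h
    rcases Int.Prime.dvd_mul' hp h with h2 | h1
    · have h3 := Int.le_of_dvd (by norm_num) h2
      have h4 := hp.two_le
      omega
    · apply ha
      have h' : (Q : ℤ) ∣ (a + 1) * (a - 1) := h1.mul_right _
      have heq : (a + 1) * (a - 1) = a ^ 2 - 1 := by ring
      rwa [heq] at h'
  have hc0 : ((c : ZMod Q)) ≠ 0 := by
    rw [Ne, ZMod.intCast_zmod_eq_zero_iff_dvd]; exact hcQ
  have hδ : δ = 1 ∨ δ = -1 := legendreSym.eq_one_or_neg_one Q hc0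
  have hδ2 : δ * δ = 1 := by rcases hδ with h | h <;> rw [h] <;> norm_num
  have hQprime : Prime (Q : ℤ) := by
    rw [Int.prime_iff_natAbs_prime]; simpa using hp
  obtain ⟨u, v, huv⟩ : IsCoprime (Q : ℤ) c := hQprime.coprime_iff_not_dvd.mpr hcQ
  have hcv : (Q : ℤ) ∣ c * v - 1 := ⟨-u, by linarith [huv]⟩
  have hQ2 : Q / 2 = m := by omega
  have euler : ∀ z : ℤ, (Q : ℤ) ∣ z ^ m - legendreSym Q z := by
    intro z
    rw [← ZMod.intCast_zmod_eq_zero_iff_dvd]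
    push_cast
    rw [← hQ2, ← legendreSym.eq_pow Q z]
    ring
  have eulerD : (Q : ℤ) ∣ D ^ m - ε := euler D
  have eulerc : (Q : ℤ) ∣ c ^ m - δ := euler c
  have fermat : (Q : ℤ) ∣ a ^ Q - a := by
    rw [← ZMod.intCast_zmod_eq_zero_iff_dvd]
    push_cast
    rw [ZMod.pow_card]
    ring
  -- set up the ring ℤ√D
  set x : Zsqrtd D := ⟨a, 1⟩ with hxdef
  set x' : Zsqrtd D := ⟨a, -1⟩ with hx'def
  set s : Zsqrtd D := ⟨0, 1⟩ with hsdef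
  set aA : Zsqrtd D := ((a : ℤ) : Zsqrtd D) with haAdef
  set qA : Zsqrtd D := ((Q : ℤ) : Zsqrtd D) with hqAdef
  have hare : aA.re = a := Zsqrtd.re_intCast a
  have haim : aA.im = 0 := Zsqrtd.im_intCast a
  have hxx' : x * x' = 1 := by
    rw [Zsqrtd.ext_iff]
    constructor <;>
      simp [hxdef, hx'def, Zsqrtd.re_mul, Zsqrtd.im_mul, hDdef] <;> ring
  have hsum : x + x' = 2 * aA := by
    rw [Zsqrtd.ext_iff]
    constructor <;>
      simp [hxdef, hx'def, Zsqrtd.re_add, Zsqrtd.im_add, hare, haim]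
    ring
  have hxas : x = aA + s := by
    rw [Zsqrtd.ext_iff]
    constructor <;> simp [hxdef, hsdef, hare, haim]
  have hx'as : x' = aA - s := by
    rw [Zsqrtd.ext_iff]
    constructor <;> simp [hx'def, hsdef, hare, haim]
  have hss : s * s = ((D : ℤ) : Zsqrtd D) := by
    rw [Zsqrtd.ext_iff]
    constructor <;> simp [hsdef, Zsqrtd.re_mul, Zsqrtd.im_mul,
      Zsqrtd.re_intCast, Zsqrtd.im_intCast]
  have hx2 : x ^ 2 = 2 * aA * x - 1 := by
    linear_combination x * hsum - hxx'
  have hx'2 : x' ^ 2 = 2 * aA * x' - 1 := by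
    linear_combination x' * hsum - hxx'
  -- transfer of integer congruences
  have intdvd : ∀ z w : ℤ, (Q : ℤ) ∣ z - w →
      qA ∣ ((z : Zsqrtd D) - (w : Zsqrtd D)) := by
    intro z w h
    have h2 : ((Q : ℤ) : Zsqrtd D) ∣ (((z - w : ℤ)) : Zsqrtd D) :=
      (Zsqrtd.intCast_dvd_intCast _ _).mpr h
    rw [hqAdef]
    push_cast at h2 ⊢
    exact h2
  -- cancel c modulo Q
  have hdcv : qA ∣ ((c * v : ℤ) : Zsqrtd D) - 1 := by
    have := intdvd (c * v) 1 hcv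
    push_cast at this ⊢
    exact this
  have hcancel : ∀ t : Zsqrtd D, qA ∣ ((c : ℤ) : Zsqrtd D) * t → qA ∣ t := by
    intro t h
    have hrw : t = ((v : ℤ) : Zsqrtd D) * (((c : ℤ) : Zsqrtd D) * t)
        - (((c * v : ℤ) : Zsqrtd D) - 1) * t := by
      push_cast
      ring
    rw [hrw]
    exact dvd_sub (h.mul_left _) (hdcv.mul_right t)
  -- Chebyshev evaluation identity
  have cheb : ∀ k : ℕ,
      x ^ k + x' ^ k = (((T ℤ (k : ℤ)).eval a * 2 : ℤ) : Zsqrtd D) := by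
    intro k
    induction k using Nat.twoStepInduction with
    | zero => norm_num [T_zero]
    | one =>
      rw [pow_one, pow_one, hsum]
      norm_num [T_one]
      push_cast [haAdef]
      ring
    | more k ih1 ih2 =>
      have hT : (T ℤ ((k : ℤ) + 2)).eval a
          = 2 * a * (T ℤ ((k : ℤ) + 1)).eval a - (T ℤ (k : ℤ)).eval a := by
        rw [T_add_two]
        simp [eval_mul, eval_sub]
      have key : x ^ (k + 2) + x' ^ (k + 2)
          = 2 * aA * (x ^ (k + 1) + x' ^ (k + 1)) - (x ^ k + x' ^ k) := by
        linear_combination (x ^ k) * hx2 + (x' ^ k) * hx'2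
      have h1 : ((k + 1 : ℕ) : ℤ) = (k : ℤ) + 1 := by push_cast; ring
      have h2 : ((k + 2 : ℕ) : ℤ) = (k : ℤ) + 2 := by push_cast; ring
      rw [h1] at ih2
      rw [key, ih1, ih2, h2, hT]
      push_cast [haAdef]
      ring
  -- Frobenius: x^Q ≡ aA + ε • s mod Q
  obtain ⟨r, hr⟩ := exists_add_pow_prime_eq hp aA s
  have hqnat : (Q : Zsqrtd D) = qA := by
    rw [hqAdef]; push_cast; rfl
  have haQ : qA ∣ aA ^ Q - aA := by
    have h2 := intdvd (a ^ Q) a fermat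
    push_cast at h2
    rw [haAdef]
    push_cast
    exact h2
  have hsQ : s ^ Q = ((D ^ m : ℤ) : Zsqrtd D) * s := by
    have hQe : Q = 2 * m + 1 := hm
    calc s ^ Q = (s * s) ^ m * s := by
          rw [← pow_two, ← pow_mul, ← pow_succ, ← hQe]
      _ = ((D ^ m : ℤ) : Zsqrtd D) * s := by rw [hss]; push_cast; ring
  have hsQε : qA ∣ s ^ Q - ((ε : ℤ) : Zsqrtd D) * s := by
    rw [hsQ]
    have h2 := (intdvd (D ^ m) ε eulerD).mul_right s
    have hrw : ((D ^ m : ℤ) : Zsqrtd D) * s - ((ε : ℤ) : Zsqrtd D) * s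
        = (((D ^ m : ℤ) : Zsqrtd D) - ((ε : ℤ) : Zsqrtd D)) * s := by ring
    rw [hrw]
    exact h2
  have hfrob : qA ∣ x ^ Q - (aA + ((ε : ℤ) : Zsqrtd D) * s) := by
    rw [hxas, hr]
    have hrw : aA ^ Q + s ^ Q + (Q : Zsqrtd D) * aA * s * r - (aA + ((ε : ℤ) : Zsqrtd D) * s)
        = (aA ^ Q - aA) + (s ^ Q - ((ε : ℤ) : Zsqrtd D) * s) + (Q : Zsqrtd D) * (aA * s * r) := by
      ring
    rw [hrw, hqnat]
    exact dvd_add (dvd_add haQ hsQε) (dvd_mul_right qA (aA * s * r))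
  -- y := 1 + x
  set y : Zsqrtd D := 1 + x with hydef
  set y' : Zsqrtd D := 1 + x' with hy'def
  have hyy' : y * y' = ((c : ℤ) : Zsqrtd D) := by
    rw [hydef, hy'def, hcdef]
    push_cast [haAdef] at hsum hxx' ⊢
    linear_combination hsum + hxx'
  have hy2 : y ^ 2 = ((c : ℤ) : Zsqrtd D) * x := by
    rw [hydef, hcdef]
    push_cast [haAdef] at hx2 ⊢
    linear_combination hx2
  obtain ⟨r2, hr2⟩ := exists_add_pow_prime_eq hp (1 : Zsqrtd D) x
  rw [one_pow] at hr2
  -- main unified ending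
  have main : ∀ N : ℕ, ((Q : ℤ) - ε) / 2 = (N : ℤ) →
      qA ∣ ((c ^ m : ℤ) : Zsqrtd D) * x ^ N - 1 →
      ((Q : ℤ) ^ 2) ∣ (T ℤ (((Q : ℤ) - ε) / 2)).eval a - δ := by
    intro N hNind hkey
    set δA : Zsqrtd D := ((δ : ℤ) : Zsqrtd D) with hδAdef
    have hδ2A : δA * δA = 1 := by
      rw [hδAdef]
      exact_mod_cast congrArg (fun z : ℤ => ((z : Zsqrtd D))) hδ2
    have hkeyδ : qA ∣ δA * x ^ N - 1 := by
      have heul : (Q : ℤ) ∣ δ - c ^ m := by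
        have h3 := dvd_neg.mpr eulerc
        rwa [neg_sub] at h3
      have h2 := (intdvd δ (c ^ m) heul).mul_right (x ^ N)
      refine dvd_sub_trans' (q := qA) (b := ((c ^ m : ℤ) : Zsqrtd D) * x ^ N) ?_ hkey
      have hrw : δA * x ^ N - ((c ^ m : ℤ) : Zsqrtd D) * x ^ N
          = (((δ : ℤ) : Zsqrtd D) - ((c ^ m : ℤ) : Zsqrtd D)) * x ^ N := by
        rw [hδAdef]; ring
      rw [hrw]
      exact h2
    have hxNδ : qA ∣ x ^ N - δA := by
      have hrw : x ^ N - δA = δA * (δA * x ^ N - 1) := by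
        linear_combination (-(x ^ N)) * hδ2A
      rw [hrw]
      exact hkeyδ.mul_left _
    have hu : x ^ N * x' ^ N = 1 := by rw [← mul_pow, hxx', one_pow]
    have hiden : x ^ N + x' ^ N - 2 * δA = x' ^ N * (x ^ N - δA) ^ 2 := by
      linear_combination (-(x ^ N) + 2 * δA) * hu - x' ^ N * hδ2A
    have hsq : qA ^ 2 ∣ x ^ N + x' ^ N - 2 * δA := by
      rw [hiden]
      exact (pow_dvd_pow_of_dvd hxNδ 2).mul_left _
    have htrans : x ^ N + x' ^ N - 2 * δA
        = ((((T ℤ (N : ℤ)).eval a * 2 - 2 * δ : ℤ)) : Zsqrtd D) := by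
      rw [cheb N, hδAdef]
      push_cast
      ring
    have hq2 : qA ^ 2 = (((Q : ℤ) ^ 2 : ℤ) : Zsqrtd D) := by
      rw [hqAdef]; push_cast; ring
    rw [htrans, hq2] at hsq
    have hZ : ((Q : ℤ) ^ 2) ∣ (T ℤ (N : ℤ)).eval a * 2 - 2 * δ :=
      (Zsqrtd.intCast_dvd_intCast _ _).mp hsq
    have hZ' : ((Q : ℤ) ^ 2) ∣ ((T ℤ (N : ℤ)).eval a - δ) * 2 := by
      have hrw : ((T ℤ (N : ℤ)).eval a - δ) * 2 = (T ℤ (N : ℤ)).eval a * 2 - 2 * δ := by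
        ring
      rw [hrw]; exact hZ
    have cop2 : IsCoprime ((Q : ℤ)) 2 := by
      apply hQprime.coprime_iff_not_dvd.mpr
      intro h
      have h3 := Int.le_of_dvd (by norm_num) h
      have h4 := hp.two_le
      omega
    rw [hNind]
    exact (cop2.pow_left).dvd_of_dvd_mul_right hZ'
  -- now the two cases
  rcases hε with hε1 | hε1
  · -- ε = 1
    have hNind : ((Q : ℤ) - ε) / 2 = (m : ℤ) := by rw [hε1]; omega
    apply main m hNind
    have hfx : qA ∣ x ^ Q - x := by
      have h2 := hfrob
      rw [hε1] at h2
      have hrw : x ^ Q - x = x ^ Q - (aA + ((1 : ℤ) : Zsqrtd D) * s) := by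
        rw [hxas]; push_cast; ring
      rw [hrw]; exact h2
    have hyQ : qA ∣ y ^ Q - y := by
      rw [hydef, hr2, hqnat]
      have hrw : 1 + x ^ Q + qA * 1 * x * r2 - (1 + x) = (x ^ Q - x) + qA * (x * r2) := by ring
      rw [hrw]
      exact dvd_add hfx (dvd_mul_right qA (x * r2))
    have hfac : qA ∣ ((c : ℤ) : Zsqrtd D) * (y ^ (2 * m) - 1) := by
      have h2 := hyQ.mul_right y'
      have hrw : (y ^ Q - y) * y' = (y ^ (2 * m) - 1) * (y * y') := by
        rw [hm]; ring
      rw [hrw, hyy'] at h2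
      have hrw2 : ((c : ℤ) : Zsqrtd D) * (y ^ (2 * m) - 1)
          = (y ^ (2 * m) - 1) * ((c : ℤ) : Zsqrtd D) := by ring
      rw [hrw2]
      exact h2
    have h2m : qA ∣ y ^ (2 * m) - 1 := hcancel _ hfac
    have hyexp : y ^ (2 * m) = ((c ^ m : ℤ) : Zsqrtd D) * x ^ m := by
      rw [pow_mul', ← pow_mul, mul_comm m 2, pow_mul, hy2, mul_pow]
      push_cast
      ring
    rw [hyexp] at h2m
    exact h2m
  · -- ε = -1
    have hNind : ((Q : ℤ) - ε) / 2 = ((m + 1 : ℕ) : ℤ) := by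
      rw [hε1]; push_cast; omega
    apply main (m + 1) hNind
    have hfx : qA ∣ x ^ Q - x' := by
      have h2 := hfrob
      rw [hε1] at h2
      have hrw : x ^ Q - x' = x ^ Q - (aA + ((-1 : ℤ) : Zsqrtd D) * s) := by
        rw [hx'as]; push_cast; ring
      rw [hrw]; exact h2
    have hyQ : qA ∣ y ^ Q - y' := by
      rw [hydef, hy'def, hr2, hqnat]
      have hrw : 1 + x ^ Q + qA * 1 * x * r2 - (1 + x') = (x ^ Q - x') + qA * (x * r2) := by ring
      rw [hrw]
      exact dvd_add hfx (dvd_mul_right qA (x * r2))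
    have hfac : qA ∣ ((c : ℤ) : Zsqrtd D) * (((c ^ m : ℤ) : Zsqrtd D) * x ^ (m + 1) - 1) := by
      have h2 := hyQ.mul_right y
      have hrw : (y ^ Q - y') * y = y ^ (Q + 1) - y' * y := by
        rw [pow_succ]; ring
      rw [hrw] at h2
      have hyexp : y ^ (Q + 1)
          = ((c : ℤ) : Zsqrtd D) * (((c ^ m : ℤ) : Zsqrtd D) * x ^ (m + 1)) := by
        have hQ1 : Q + 1 = 2 * (m + 1) := by omega
        rw [hQ1, pow_mul', ← pow_mul, mul_comm (m+1) 2, pow_mul, hy2, mul_pow]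
        push_cast
        ring
      have hy'y : y' * y = ((c : ℤ) : Zsqrtd D) := by rw [mul_comm]; exact hyy'
      rw [hyexp, hy'y] at h2
      have hrw2 : ((c : ℤ) : Zsqrtd D) * (((c ^ m : ℤ) : Zsqrtd D) * x ^ (m + 1) - 1)
          = ((c : ℤ) : Zsqrtd D) * (((c ^ m : ℤ) : Zsqrtd D) * x ^ (m + 1))
            - ((c : ℤ) : Zsqrtd D) := by ring
      rw [hrw2]
      exact h2
    exact hcancel _ hfac
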